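/- Let α > 0 and β > 0 be real, let φ : ℕ → ℂ, and let x ∈ ℂ be such that ∑_{n=0}^∞ |φ(n)| |x|^n/n! < ∞. Define f(u) = ∑_{n=0}^∞ φ(n)(-u)^n/n!. Then u ↦ u^{α-1}(1-u)^{β-1} f(ux) is integrable on (0,1) and ∫_0^1 u^{α-1}(1-u)^{β-1} f(ux) du = ∑_{n=0}^∞ [Ψ(n)/n!] (-x)^n with Ψ(n) = B(α+n, β)·φ(n), where B(a,b) = Γ(a)Γ(b)/Γ(a+b) is the Euler Beta function. -/

import Mathlib

open MeasureTheory intervalIntegral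

/-- **Beta-transform extension of the Borel transform.** If
`∑_n |φ(n)| |x|^n / n! < ∞` and `f(u) = ∑_n φ(n)(-u)^n/n!`, then for `α, β > 0`
the function `u ↦ u^(α-1) (1-u)^(β-1) f(ux)` is integrable on `(0,1)` and
`∫_0^1 u^(α-1) (1-u)^(β-1) f(ux) du = ∑_n [Ψ(n)/n!] (-x)^n` with
`Ψ(n) = B(α+n,β) φ(n)`, where `B(a,b) = Γ(a)Γ(b)/Γ(a+b)` is the Beta function. -/
theorem beta_transform (α β : ℝ) (hα : 0 < α) (hβ : 0 < β)
    (φ : ℕ → ℂ) (x : ℂ)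
    (habs : Summable (fun n : ℕ => ‖φ n‖ * ‖x‖ ^ n / (n.factorial : ℝ)))
    (f : ℂ → ℂ) (hf : ∀ u : ℂ, f u = ∑' n : ℕ, φ n * (-u) ^ n / (n.factorial : ℂ)) :
    IntervalIntegrable
      (fun u : ℝ => ((u ^ (α - 1) * (1 - u) ^ (β - 1) : ℝ) : ℂ) * f (u * x))
      volume 0 1 ∧
      ∫ u in (0 : ℝ)..1, ((u ^ (α - 1) * (1 - u) ^ (β - 1) : ℝ) : ℂ) * f (u * x)
        = ∑' n : ℕ,
            ((Real.Gamma (α + n) * Real.Gamma β / Real.Gamma (α + β + n) : ℝ) : ℂ) *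
              φ n / (n.factorial : ℂ) * (-x) ^ n := by
  -- continuity of u ↦ f (u x) on [0,1]
  have hcont : ContinuousOn (fun u : ℝ => f ((u : ℂ) * x)) (Set.uIcc (0:ℝ) 1) := by
    have h1 : ContinuousOn (fun u : ℝ => ∑' n : ℕ, φ n * (-((u:ℂ) * x)) ^ n / (n.factorial : ℂ))
        (Set.uIcc (0:ℝ) 1) := by
      refine continuousOn_tsum (fun n => Continuous.continuousOn (by fun_prop)) habs ?_
      intro n u hu
      have hu1 : |u| ≤ 1 := by
        rw [Set.uIcc_of_le (by norm_num)] at hu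
        rw [abs_le]; constructor <;> linarith [hu.1, hu.2]
      have : ‖φ n * (-((u:ℂ) * x)) ^ n / (n.factorial : ℂ)‖
          = ‖φ n‖ * (|u| * ‖x‖) ^ n / n.factorial := by
        simp [norm_mul, norm_div, norm_pow, Complex.norm_real, abs_mul, mul_pow]
      rw [this]
      gcongr
      calc |u| * ‖x‖ ≤ 1 * ‖x‖ := by gcongr
        _ = ‖x‖ := one_mul _
    exact h1.congr (fun u _ => hf _)
  -- the complex beta integrand
  have hbetaC : IntervalIntegrable
      (fun u : ℝ => (u:ℂ) ^ ((α:ℂ) - 1) * ((1:ℂ) - u) ^ ((β:ℂ) - 1)) volume 0 1 :=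
    Complex.betaIntegral_convergent (by simpa using hα) (by simpa using hβ)
  have hcast : ∀ u ∈ Set.Icc (0:ℝ) 1,
      ((u ^ (α - 1) * (1 - u) ^ (β - 1) : ℝ) : ℂ)
        = (u:ℂ) ^ ((α:ℂ) - 1) * ((1:ℂ) - u) ^ ((β:ℂ) - 1) := by
    intro u hu
    rw [Complex.ofReal_mul, Complex.ofReal_cpow hu.1, Complex.ofReal_cpow (by linarith [hu.2])]
    push_cast
    ring_nf
  have hbetaR : IntervalIntegrable
      (fun u : ℝ => ((u ^ (α - 1) * (1 - u) ^ (β - 1) : ℝ) : ℂ)) volume 0 1 := by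
    rw [intervalIntegrable_iff_integrableOn_Ioc_of_le (by norm_num)] at hbetaC ⊢
    exact hbetaC.congr_fun (fun u hu => (hcast u ⟨hu.1.le, hu.2⟩).symm) measurableSet_Ioc
  have hIntegrable : IntervalIntegrable
      (fun u : ℝ => ((u ^ (α - 1) * (1 - u) ^ (β - 1) : ℝ) : ℂ) * f (u * x)) volume 0 1 :=
    hbetaR.mul_continuousOn hcont
  refine ⟨hIntegrable, ?_⟩
  set F : ℕ → ℝ → ℂ := fun n u =>
    ((u ^ (α - 1) * (1 - u) ^ (β - 1) : ℝ) : ℂ) * (φ n * (-((u:ℂ) * x)) ^ n / (n.factorial : ℂ))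
    with hF
  set Fc : ℕ → ℝ → ℂ := fun n u =>
    (u:ℂ) ^ (((α + n : ℝ):ℂ) - 1) * ((1:ℂ) - u) ^ ((β:ℂ) - 1) *
      (φ n * (-x) ^ n / (n.factorial : ℂ)) with hFc
  have hFeq : ∀ n : ℕ, ∀ u ∈ Set.Ioc (0:ℝ) 1, F n u = Fc n u := by
    intro n u hu
    obtain ⟨h0, h1⟩ := hu
    have e1 : ((u ^ (α-1) : ℝ):ℂ) * (u:ℂ) ^ n = (u:ℂ) ^ (((α + n : ℝ):ℂ) - 1) := by
      rw [← Complex.ofReal_pow, ← Complex.ofReal_mul, ← Real.rpow_natCast u n,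
          ← Real.rpow_add h0, Complex.ofReal_cpow h0.le]
      push_cast; ring_nf
    have e2 : (((1-u) ^ (β-1) : ℝ):ℂ) = ((1:ℂ) - u) ^ ((β:ℂ) - 1) := by
      rw [Complex.ofReal_cpow (by linarith)]; push_cast; ring_nf
    have e3 : (-((u:ℂ) * x)) ^ n = (u:ℂ) ^ n * (-x) ^ n := by
      rw [show -((u:ℂ)*x) = (u:ℂ) * (-x) by ring, mul_pow]
    simp only [hF, hFc, Complex.ofReal_mul, e3, ← e1, ← e2]
    ring
  -- interval integrability of Fc n
  have hFcInt : ∀ n : ℕ, IntervalIntegrable (Fc n) volume 0 1 := by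
    intro n
    exact (Complex.betaIntegral_convergent (by simp; positivity) (by simpa using hβ)).mul_const _
  have hFInt : ∀ n : ℕ, IntegrableOn (F n) (Set.Ioc (0:ℝ) 1) := by
    intro n
    have := (intervalIntegrable_iff_integrableOn_Ioc_of_le (by norm_num : (0:ℝ) ≤ 1)).mp (hFcInt n)
    exact this.congr_fun (fun u hu => (hFeq n u hu).symm) measurableSet_Ioc
  -- the real beta integrand
  set B : ℝ → ℝ := fun u => u ^ (α-1) * (1-u) ^ (β-1) with hBdef
  have hcast : ∀ u ∈ Set.Icc (0:ℝ) 1,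
      ((u ^ (α - 1) * (1 - u) ^ (β - 1) : ℝ) : ℂ)
        = (u:ℂ) ^ ((α:ℂ) - 1) * ((1:ℂ) - u) ^ ((β:ℂ) - 1) := by
    intro u hu
    rw [Complex.ofReal_mul, Complex.ofReal_cpow hu.1, Complex.ofReal_cpow (by linarith [hu.2])]
    push_cast; ring_nf
  have hBInt : IntegrableOn B (Set.Ioc (0:ℝ) 1) := by
    have h1 := (intervalIntegrable_iff_integrableOn_Ioc_of_le (by norm_num : (0:ℝ) ≤ 1)).mp
      (Complex.betaIntegral_convergent (u := (α:ℂ)) (v := (β:ℂ)) (by simpa using hα)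
        (by simpa using hβ))
    have h2 : IntegrableOn (fun u : ℝ => ‖(u:ℂ) ^ ((α:ℂ) - 1) * ((1:ℂ) - u) ^ ((β:ℂ) - 1)‖)
        (Set.Ioc (0:ℝ) 1) := h1.norm
    refine h2.congr_fun (fun u hu => ?_) measurableSet_Ioc
    dsimp only
    rw [← hcast u ⟨hu.1.le, hu.2⟩, Complex.norm_real, Real.norm_of_nonneg]
    exact mul_nonneg (Real.rpow_nonneg hu.1.le _) (Real.rpow_nonneg (by linarith [hu.2]) _)
  -- norm bound
  have hnorm : ∀ n : ℕ, ∀ u ∈ Set.Ioc (0:ℝ) 1,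
      ‖F n u‖ ≤ B u * (‖φ n‖ * ‖x‖ ^ n / (n.factorial : ℝ)) := by
    intro n u hu
    obtain ⟨h0, h1⟩ := hu
    have hBnn : 0 ≤ B u :=
      mul_nonneg (Real.rpow_nonneg h0.le _) (Real.rpow_nonneg (by linarith) _)
    have : ‖F n u‖ = |B u| * (‖φ n‖ * (|u| * ‖x‖) ^ n / (n.factorial : ℝ)) := by
      simp [hF, hBdef, norm_mul, norm_div, norm_pow, Complex.norm_real, abs_mul, mul_pow]
    rw [this, abs_of_nonneg hBnn]
    gcongr
    calc |u| * ‖x‖ ≤ 1 * ‖x‖ := by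
          gcongr; rw [abs_le]; constructor <;> linarith
      _ = ‖x‖ := one_mul _
  have hnormInt : ∀ n : ℕ, ∫ u in Set.Ioc (0:ℝ) 1, ‖F n u‖
      ≤ (∫ u in Set.Ioc (0:ℝ) 1, B u) * (‖φ n‖ * ‖x‖ ^ n / (n.factorial : ℝ)) := by
    intro n
    rw [← MeasureTheory.integral_mul_const]
    exact setIntegral_mono_on (hFInt n).norm (hBInt.mul_const _) measurableSet_Ioc (hnorm n)
  have hsum : Summable (fun n : ℕ => ∫ u in Set.Ioc (0:ℝ) 1, ‖F n u‖) := by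
    refine Summable.of_nonneg_of_le (fun n => integral_nonneg (fun u => norm_nonneg _))
      (fun n => hnormInt n) (habs.mul_left _)
  have hHS := MeasureTheory.hasSum_integral_of_summable_integral_norm
    (μ := volume.restrict (Set.Ioc (0:ℝ) 1)) (F := F) (fun n => (hFInt n)) hsum
  -- identify the integral of the sum
  have htsum : ∀ u ∈ Set.Ioc (0:ℝ) 1,
      (∑' n : ℕ, F n u) = ((u ^ (α - 1) * (1 - u) ^ (β - 1) : ℝ) : ℂ) * f ((u:ℂ) * x) := by
    intro u _
    rw [hf, ← tsum_mul_left]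
  have hkey : (∫ u in Set.Ioc (0:ℝ) 1, ∑' n : ℕ, F n u)
      = ∫ u in (0:ℝ)..1, ((u ^ (α - 1) * (1 - u) ^ (β - 1) : ℝ) : ℂ) * f ((u:ℂ) * x) := by
    rw [integral_of_le (by norm_num : (0:ℝ) ≤ 1)]
    exact setIntegral_congr_fun measurableSet_Ioc htsum
  -- value of each integral
  have hval : ∀ n : ℕ, (∫ u in Set.Ioc (0:ℝ) 1, F n u)
      = ((Real.Gamma (α + n) * Real.Gamma β / Real.Gamma (α + β + n) : ℝ) : ℂ) *
          φ n / (n.factorial : ℂ) * (-x) ^ n := by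
    intro n
    rw [setIntegral_congr_fun measurableSet_Ioc (hFeq n),
        ← integral_of_le (by norm_num : (0:ℝ) ≤ 1)]
    have hbval : (∫ u in (0:ℝ)..1, Fc n u)
        = Complex.betaIntegral ((α + n : ℝ):ℂ) ((β:ℝ):ℂ) * (φ n * (-x) ^ n / (n.factorial : ℂ)) := by
      rw [hFc, Complex.betaIntegral, intervalIntegral.integral_mul_const]
    rw [hbval]
    have hs : 0 < Complex.re ((α + n : ℝ):ℂ) := by simp; positivity
    have ht : 0 < Complex.re ((β:ℝ):ℂ) := by simpa using hβ
    have hG := Complex.Gamma_mul_Gamma_eq_betaIntegral hs ht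
    have hne : Complex.Gamma (((α + n : ℝ):ℂ) + ((β:ℝ):ℂ)) ≠ 0 := by
      rw [show (((α + n : ℝ):ℂ) + ((β:ℝ):ℂ)) = ((α + n + β : ℝ):ℂ) by push_cast; ring,
        Complex.Gamma_ofReal]
      exact_mod_cast (Real.Gamma_pos_of_pos (by positivity)).ne'
    have hbeta : Complex.betaIntegral ((α + n : ℝ):ℂ) ((β:ℝ):ℂ)
        = ((Real.Gamma (α + n) * Real.Gamma β / Real.Gamma (α + β + n) : ℝ) : ℂ) := by
      have h2 : Complex.betaIntegral ((α + n : ℝ):ℂ) ((β:ℝ):ℂ)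
          = Complex.Gamma ((α + n : ℝ):ℂ) * Complex.Gamma ((β:ℝ):ℂ)
            / Complex.Gamma (((α + n : ℝ):ℂ) + ((β:ℝ):ℂ)) := by
        rw [hG, mul_comm, mul_div_assoc, div_self hne, mul_one]
      rw [h2, show (((α + n : ℝ):ℂ) + ((β:ℝ):ℂ)) = ((α + β + n : ℝ):ℂ) by push_cast; ring,
        Complex.Gamma_ofReal, Complex.Gamma_ofReal, Complex.Gamma_ofReal]
      push_cast; ring
    rw [hbeta]; ring
  calc ∫ u in (0:ℝ)..1, ((u ^ (α - 1) * (1 - u) ^ (β - 1) : ℝ) : ℂ) * f ((u:ℂ) * x)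
      = ∑' n : ℕ, ∫ u in Set.Ioc (0:ℝ) 1, F n u := by rw [← hkey]; exact hHS.tsum_eq.symm
    _ = _ := tsum_congr hval
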